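/- For every i ≥ 1, the greedy matrix A(n) has a one on or to the left of the main diagonal in row i: there exists j with 1 ≤ j ≤ i and a_{ij}=1. -/
import Mathlib


/-- Number of ones in row `k` strictly to the left of column `l` (columns `1..l-1`). -/
def rowOnes (a : ℕ → ℕ → Bool) (k l : ℕ) : ℕ :=
  ((Finset.Ico 1 l).filter (fun j => a k j = true)).card

/-- Number of ones in column `l` strictly above row `k` (rows `1..k-1`). -/
def colOnes (a : ℕ → ℕ → Bool) (k l : ℕ) : ℕ :=
  ((Finset.Ico 1 k).filter (fun i => a i l = true)).card

/-- The greedy (first-choice) matrix `A(n)`: entries are placed row by row, left to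
right; a one is placed at `(k,l)` unless the row already has `n+1` ones to the left,
the column already has `n+1` ones above, or a rectangle of ones would be created. -/
def IsGreedy (n : ℕ) (a : ℕ → ℕ → Bool) : Prop :=
  (∀ i j, i = 0 ∨ j = 0 → a i j = false) ∧
  ∀ k l, 1 ≤ k → 1 ≤ l →
    (a k l = true ↔
      rowOnes a k l < n + 1 ∧ colOnes a k l < n + 1 ∧
      ¬ ∃ i j, 1 ≤ i ∧ i < k ∧ 1 ≤ j ∧ j < l ∧
        a i j = true ∧ a i l = true ∧ a k j = true)

/-- Lemma 3.4a: for every `i ≥ 1`, row `i` of the greedy matrix `A(n)` has a one on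
or to the left of the main diagonal. -/
theorem stmt6 (n : ℕ) (a : ℕ → ℕ → Bool) (h : IsGreedy n a) (i : ℕ) (hi : 1 ≤ i) :
    ∃ j, 1 ≤ j ∧ j ≤ i ∧ a i j = true := by
  by_contra hcon
  push_neg at hcon
  obtain ⟨h0, hg⟩ := h
  -- row i is all zero up to column i, so rowOnes vanish
  have hrow0 : ∀ l, 1 ≤ l → l ≤ i → rowOnes a i l = 0 := by
    intro l h1 h2
    unfold rowOnes
    rw [Finset.card_eq_zero, Finset.filter_eq_empty_iff]
    intro j hj
    simp only [Finset.mem_Ico] at hj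
    exact hcon j hj.1 (le_of_lt (lt_of_lt_of_le hj.2 h2))
  -- each column l ≤ i must be saturated above row i
  have hcol : ∀ l, 1 ≤ l → l ≤ i → n + 1 ≤ colOnes a i l := by
    intro l h1 h2
    by_contra hlt
    push_neg at hlt
    have hal : a i l = true := by
      rw [hg i l hi h1]
      refine ⟨by rw [hrow0 l h1 h2]; omega, hlt, ?_⟩
      rintro ⟨i', j', _, _, h3', h4', _, _, hij'⟩
      exact hcon j' h3' (le_of_lt (lt_of_lt_of_le h4' h2)) hij'
    exact hcon l h1 h2 hal
  -- each row has at most n+1 ones among columns 1..i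
  have hrowbd : ∀ k, 1 ≤ k → rowOnes a k (i + 1) ≤ n + 1 := by
    intro k hk
    by_contra hbig
    push_neg at hbig
    set S := (Finset.Ico 1 (i + 1)).filter (fun j => a k j = true) with hS
    have hcard : n + 2 ≤ S.card := hbig
    have hne : S.Nonempty := Finset.card_pos.mp (by omega)
    set m := S.max' hne with hm
    have hmS : m ∈ S := S.max'_mem hne
    have hmmem := Finset.mem_filter.mp hmS
    have hm1 : 1 ≤ m := (Finset.mem_Ico.mp hmmem.1).1
    have hakm : a k m = true := hmmem.2
    have hsub : S.erase m ⊆ (Finset.Ico 1 m).filter (fun j => a k j = true) := by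
      intro j hj
      obtain ⟨hjne, hjS⟩ := Finset.mem_erase.mp hj
      obtain ⟨hjIco, hja⟩ := Finset.mem_filter.mp hjS
      refine Finset.mem_filter.mpr ⟨Finset.mem_Ico.mpr ⟨(Finset.mem_Ico.mp hjIco).1, ?_⟩, hja⟩
      exact lt_of_le_of_ne (S.le_max' j hjS) hjne
    have hge : n + 1 ≤ rowOnes a k m := by
      have := Finset.card_le_card hsub
      have hce : (S.erase m).card = S.card - 1 := Finset.card_erase_of_mem hmS
      unfold rowOnes
      omega
    have := ((hg k m hk hm1).mp hakm).1
    omega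
  -- double counting
  have key : ∑ l ∈ Finset.Ico 1 (i + 1), colOnes a i l
      = ∑ k ∈ Finset.Ico 1 i, rowOnes a k (i + 1) := by
    simp only [rowOnes, colOnes, Finset.card_filter]
    rw [Finset.sum_comm]
  have hlow : i * (n + 1) ≤ ∑ l ∈ Finset.Ico 1 (i + 1), colOnes a i l := by
    have : ∑ _l ∈ Finset.Ico 1 (i + 1), (n + 1) = i * (n + 1) := by
      rw [Finset.sum_const, Nat.card_Ico, smul_eq_mul, Nat.add_sub_cancel]
    rw [← this]
    refine Finset.sum_le_sum ?_
    intro l hl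
    obtain ⟨h1, h2⟩ := Finset.mem_Ico.mp hl
    exact hcol l h1 (by omega)
  have hup : ∑ k ∈ Finset.Ico 1 i, rowOnes a k (i + 1) ≤ (i - 1) * (n + 1) := by
    have : ∑ _k ∈ Finset.Ico 1 i, (n + 1) = (i - 1) * (n + 1) := by
      rw [Finset.sum_const, Nat.card_Ico, smul_eq_mul]
    rw [← this]
    refine Finset.sum_le_sum ?_
    intro k hk
    exact hrowbd k (Finset.mem_Ico.mp hk).1
  rw [key] at hlow
  have hmul : i * (n + 1) ≤ (i - 1) * (n + 1) := le_trans hlow hup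
  have : i ≤ i - 1 := Nat.le_of_mul_le_mul_right
    (by simpa [mul_comm] using hmul) (by omega)
  omega
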